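/- Let W be an M×M real matrix whose entrywise absolute value |W| has Perron–Frobenius eigenvalue (spectral radius) strictly less than 1. Then (I - W) is invertible, and more generally for any 1-Lipschitz componentwise map φ with φ(0)=0, the equation X = x + φ(WX + b) has a unique solution. -/

import Mathlib

open Matrix

attribute [local instance] Matrix.linftyOpNormedRing Matrix.linftyOpNormedAlgebra

namespace Stmt18Aux

variable {M : ℕ}

abbrev Mat (M : ℕ) := Matrix (Fin M) (Fin M) ℝ

def Nonneg (B : Mat M) : Prop := ∀ i j, 0 ≤ B i j

lemma Nonneg.mul {B C : Mat M} (hB : Nonneg B) (hC : Nonneg C) : Nonneg (B * C) := by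
  intro i j
  rw [Matrix.mul_apply]
  exact Finset.sum_nonneg fun k _ => mul_nonneg (hB i k) (hC k j)

lemma nonneg_one : Nonneg (1 : Mat M) := by
  intro i j
  rcases eq_or_ne i j with h | h <;> simp [Matrix.one_apply, h]

lemma Nonneg.pow {B : Mat M} (hB : Nonneg B) : ∀ n, Nonneg (B ^ n)
  | 0 => by simpa [pow_zero] using (nonneg_one (M := M))
  | (n + 1) => by rw [pow_succ]; exact (hB.pow n).mul hB

lemma Nonneg.smul {B : Mat M} {c : ℝ} (hc : 0 ≤ c) (hB : Nonneg B) : Nonneg (c • B) := by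
  intro i j
  simpa [Matrix.smul_apply] using mul_nonneg hc (hB i j)

lemma entry_tsum (f : ℕ → Mat M) (hf : Summable f) (i j : Fin M) :
    (∑' n, f n) i j = ∑' n, f n i j := by
  let e : Mat M →ₗ[ℝ] ℝ :=
    { toFun := fun B => B i j, map_add' := fun B C => rfl, map_smul' := fun c B => rfl }
  exact e.toContinuousLinearMap.map_tsum hf

lemma Nonneg.tsum {f : ℕ → Mat M} (hf : Summable f) (h : ∀ n, Nonneg (f n)) :
    Nonneg (∑' n, f n) := by
  intro i j
  rw [entry_tsum f hf i j]
  exact tsum_nonneg fun n => h n i j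

lemma nonneg_inv_oneSub {C : Mat M} (hC : Nonneg C) (h : ‖C‖ < 1) :
    Nonneg (((Units.oneSub C h)⁻¹ : (Mat M)ˣ) : Mat M) := by
  have he : (((Units.oneSub C h)⁻¹ : (Mat M)ˣ) : Mat M) = ∑' n, C ^ n := rfl
  rw [he]
  exact Nonneg.tsum (summable_geometric_of_norm_lt_one h) hC.pow

lemma base {A : Mat M} (hA : Nonneg A) {t : ℝ} (ht : ‖A‖ < t) :
    Nonneg (Ring.inverse (t • (1 : Mat M) - A)) := by
  have ht0 : 0 < t := lt_of_le_of_lt (norm_nonneg A) ht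
  set C : Mat M := t⁻¹ • A with hCdef
  have hCn : ‖C‖ < 1 := by
    rw [hCdef, norm_smul, Real.norm_eq_abs, abs_of_pos (inv_pos.2 ht0), inv_mul_lt_iff₀ ht0,
      mul_one]
    exact ht
  have hCpos : Nonneg C := Nonneg.smul (inv_pos.2 ht0).le hA
  have hinv : (t : ℝ) • (1 : Mat M) * (t⁻¹ • (1 : Mat M)) = 1 := by
    rw [smul_mul_assoc, one_mul, smul_smul, mul_inv_cancel₀ ht0.ne', one_smul]
  have hinv' : (t⁻¹ : ℝ) • (1 : Mat M) * (t • (1 : Mat M)) = 1 := by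
    rw [smul_mul_assoc, one_mul, smul_smul, inv_mul_cancel₀ ht0.ne', one_smul]
  let ut : (Mat M)ˣ := ⟨t • 1, t⁻¹ • 1, hinv, hinv'⟩
  let u : (Mat M)ˣ := ut * Units.oneSub C hCn
  have hval : (u : Mat M) = t • (1 : Mat M) - A := by
    show (t • (1 : Mat M)) * (1 - C) = _
    rw [mul_sub, mul_one, hCdef, smul_mul_assoc, one_mul, smul_smul,
      mul_inv_cancel₀ ht0.ne', one_smul]
  rw [← hval, Ring.inverse_unit]
  have hval2 : ((u⁻¹ : (Mat M)ˣ) : Mat M) =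
      (((Units.oneSub C hCn)⁻¹ : (Mat M)ˣ) : Mat M) * ((ut⁻¹ : (Mat M)ˣ) : Mat M) := by
    rw [show u⁻¹ = (Units.oneSub C hCn)⁻¹ * ut⁻¹ from mul_inv_rev ut (Units.oneSub C hCn),
      Units.val_mul]
  rw [hval2]
  exact (nonneg_inv_oneSub hCpos hCn).mul (Nonneg.smul (inv_pos.2 ht0).le nonneg_one)

lemma step {A : Mat M} {s t : ℝ} (hus : IsUnit (s • (1 : Mat M) - A))
    (hBs : Nonneg (Ring.inverse (s • (1 : Mat M) - A)))
    (hts : t ≤ s)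
    (hsm : (s - t) * ‖Ring.inverse (s • (1 : Mat M) - A)‖ < 1) :
    Nonneg (Ring.inverse (t • (1 : Mat M) - A)) := by
  have hCn : ‖(s - t) • Ring.inverse (s • (1 : Mat M) - A)‖ < 1 := by
    rw [norm_smul, Real.norm_eq_abs, abs_of_nonneg (sub_nonneg.2 hts)]
    exact hsm
  have hCpos : Nonneg ((s - t) • Ring.inverse (s • (1 : Mat M) - A)) :=
    Nonneg.smul (sub_nonneg.2 hts) hBs
  have hfact : t • (1 : Mat M) - A =
      (s • (1 : Mat M) - A) * (1 - (s - t) • Ring.inverse (s • (1 : Mat M) - A)) := by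
    rw [mul_sub, mul_one, mul_smul_comm, Ring.mul_inverse_cancel _ hus]
    have h1 : (s - t) • (1 : Mat M) = s • 1 - t • 1 := sub_smul s t 1
    rw [h1]
    abel
  have hval : t • (1 : Mat M) - A =
      ((hus.unit * Units.oneSub _ hCn : (Mat M)ˣ) : Mat M) := by
    rw [Units.val_mul, IsUnit.unit_spec, Units.val_oneSub, ← hfact]
  rw [hval, Ring.inverse_unit]
  have hval2 : (((hus.unit * Units.oneSub _ hCn)⁻¹ : (Mat M)ˣ) : Mat M) =
      (((Units.oneSub _ hCn)⁻¹ : (Mat M)ˣ) : Mat M) * ((hus.unit⁻¹ : (Mat M)ˣ) : Mat M) := by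
    rw [_root_.mul_inv_rev, Units.val_mul]
  have hval3 : ((hus.unit⁻¹ : (Mat M)ˣ) : Mat M) = Ring.inverse (s • (1 : Mat M) - A) := by
    conv_rhs => rw [← IsUnit.unit_spec hus]
    rw [Ring.inverse_unit]
  rw [hval2, hval3]
  exact (nonneg_inv_oneSub hCpos hCn).mul hBs

lemma inv_one_sub_nonneg {A : Mat M} (hA : Nonneg A)
    (hu : ∀ t : ℝ, 1 ≤ t → IsUnit (t • (1 : Mat M) - A)) :
    Nonneg (Ring.inverse ((1 : Mat M) - A)) := by
  set T : ℝ := ‖A‖ + 2 with hT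
  have hT1 : (1 : ℝ) ≤ T := by have := norm_nonneg A; simp only [hT]; linarith
  have hAT : ‖A‖ < T := by simp only [hT]; linarith
  have hcont : ContinuousOn (fun t : ℝ => ‖Ring.inverse (t • (1 : Mat M) - A)‖)
      (Set.Icc 1 T) := by
    intro t ht
    have hc : ContinuousAt (fun t : ℝ => t • (1 : Mat M) - A) t := by fun_prop
    have h1 := NormedRing.inverse_continuousAt (hu t ht.1).unit
    rw [IsUnit.unit_spec] at h1
    have h2 : ContinuousAt (Ring.inverse ∘ fun t : ℝ => t • (1 : Mat M) - A) t :=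
      ContinuousAt.comp h1 hc
    exact h2.norm.continuousWithinAt
  obtain ⟨K, hK⟩ : ∃ K, ∀ t ∈ Set.Icc (1 : ℝ) T,
      ‖Ring.inverse (t • (1 : Mat M) - A)‖ ≤ K := by
    obtain ⟨K, hK⟩ := (isCompact_Icc.image_of_continuousOn hcont).bddAbove
    exact ⟨K, fun t ht => hK (Set.mem_image_of_mem _ ht)⟩
  have hK0 : 0 ≤ K := le_trans (norm_nonneg _) (hK 1 ⟨le_refl 1, hT1⟩)
  set δ : ℝ := 1 / (2 * (K + 1)) with hδ
  have hδ0 : 0 < δ := by positivity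
  have main : ∀ k : ℕ, Nonneg (Ring.inverse ((max 1 (T - k * δ)) • (1 : Mat M) - A)) := by
    intro k
    induction k with
    | zero =>
      have h0 : max 1 (T - (0 : ℕ) * δ) = T := by
        rw [Nat.cast_zero, zero_mul, sub_zero, max_eq_right hT1]
      rw [h0]
      exact base hA hAT
    | succ k ih =>
      set s : ℝ := max 1 (T - k * δ) with hs
      set t : ℝ := max 1 (T - (k + 1 : ℕ) * δ) with htdef
      have hs1 : 1 ≤ s := le_max_left _ _
      have ht1 : 1 ≤ t := le_max_left _ _
      have hsT : s ≤ T := by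
        apply max_le hT1
        have : 0 ≤ (k : ℝ) * δ := by positivity
        linarith
      have hts : t ≤ s := by
        apply max_le_max le_rfl
        have : (k : ℝ) * δ ≤ ((k + 1 : ℕ) : ℝ) * δ := by
          push_cast
          nlinarith
        linarith
      have hst : s - t ≤ δ := by
        have heq : T - (k : ℝ) * δ = (T - ((k + 1 : ℕ) : ℝ) * δ) + δ := by push_cast; ring
        have h1 : s ≤ max 1 ((T - ((k + 1 : ℕ) : ℝ) * δ) + δ) := by
          rw [hs, heq]
        have h2 : max 1 ((T - ((k + 1 : ℕ) : ℝ) * δ) + δ) ≤ t + δ := by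
          apply max_le
          · linarith
          · have := le_max_right 1 (T - ((k + 1 : ℕ) : ℝ) * δ)
            rw [← htdef] at this
            linarith
        linarith
      have hnorm : (s - t) * ‖Ring.inverse (s • (1 : Mat M) - A)‖ < 1 := by
        have hb := hK s ⟨hs1, hsT⟩
        have h3 : (s - t) * ‖Ring.inverse (s • (1 : Mat M) - A)‖ ≤ δ * K :=
          mul_le_mul hst hb (norm_nonneg _) hδ0.le
        have h4 : δ * K < 1 := by
          rw [hδ]
          rw [div_mul_eq_mul_div, one_mul, div_lt_one (by linarith)]
          linarith
        linarith
      exact step (hu s hs1) ih hts hnorm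
  obtain ⟨k, hk⟩ := exists_nat_ge ((T - 1) / δ)
  have hfin : T - k * δ ≤ 1 := by
    rw [div_le_iff₀ hδ0] at hk
    linarith
  have := main k
  rwa [max_eq_left hfin, one_smul] at this

lemma mulVec_nonneg {B : Mat M} (hB : Nonneg B) {x : Fin M → ℝ} (hx : ∀ j, 0 ≤ x j) (i : Fin M) :
    0 ≤ B.mulVec x i := by
  simp only [Matrix.mulVec, dotProduct]
  exact Finset.sum_nonneg fun j _ => mul_nonneg (hB i j) (hx j)

lemma mulVec_mono {B : Mat M} (hB : Nonneg B) {x y : Fin M → ℝ} (hxy : ∀ j, x j ≤ y j)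
    (i : Fin M) : B.mulVec x i ≤ B.mulVec y i := by
  simp only [Matrix.mulVec, dotProduct]
  exact Finset.sum_le_sum fun j _ => mul_le_mul_of_nonneg_left (hxy j) (hB i j)

lemma exists_v {A : Mat M} (hA : Nonneg A)
    (hu : ∀ t : ℝ, 1 ≤ t → IsUnit (t • (1 : Mat M) - A)) :
    ∃ v : Fin M → ℝ, (∀ i, 1 ≤ v i) ∧ (∀ i, A.mulVec v i ≤ v i - 1) := by
  have hu1 : IsUnit ((1 : Mat M) - A) := by
    have := hu 1 le_rfl
    rwa [one_smul] at this
  set B := Ring.inverse ((1 : Mat M) - A) with hBdef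
  have hB : Nonneg B := inv_one_sub_nonneg hA hu
  have hmul : ((1 : Mat M) - A) * B = 1 := Ring.mul_inverse_cancel _ hu1
  set v : Fin M → ℝ := B.mulVec (fun _ => 1) with hv
  have hv0 : ∀ i, 0 ≤ v i := fun i => Stmt18Aux.mulVec_nonneg hB (fun _ => zero_le_one) i
  have key : ((1 : Mat M) - A).mulVec v = fun _ => (1 : ℝ) := by
    rw [hv, Matrix.mulVec_mulVec, hmul, Matrix.one_mulVec]
  have expand : ∀ i, v i - A.mulVec v i = 1 := by
    intro i
    have h := congrFun key i
    rwa [Matrix.sub_mulVec, Matrix.one_mulVec, Pi.sub_apply] at h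
  have hAv0 : ∀ i, 0 ≤ A.mulVec v i := fun i => Stmt18Aux.mulVec_nonneg hA hv0 i
  exact ⟨v, fun i => by linarith [expand i, hAv0 i], fun i => by linarith [expand i]⟩

end Stmt18Aux

theorem stmt_18 (M : ℕ) (W : Matrix (Fin M) (Fin M) ℝ)
    (hpf : ∀ mu ∈ spectrum ℝ (W.map fun a => |a|), mu < 1) :
    IsUnit (1 - W) ∧
    ∀ phi : ℝ → ℝ, LipschitzWith 1 phi → phi 0 = 0 →
      ∀ x b : Fin M → ℝ,
        ∃! X : Fin M → ℝ, ∀ i, X i = x i + phi (W.mulVec X i + b i) := by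
  classical
  set A : Matrix (Fin M) (Fin M) ℝ := W.map fun a => |a| with hAdef
  have hA : Stmt18Aux.Nonneg A := fun i j => by
    simp only [hAdef, Matrix.map_apply]
    exact abs_nonneg _
  have hu : ∀ t : ℝ, 1 ≤ t → IsUnit (t • (1 : Matrix (Fin M) (Fin M) ℝ) - A) := by
    intro t ht
    rw [← Algebra.algebraMap_eq_smul_one]
    exact spectrum.notMem_iff.mp fun hmem => absurd (hpf t hmem) (not_lt.2 ht)
  rcases Nat.eq_zero_or_pos M with hM | hM
  · subst hM
    refine ⟨⟨⟨1 - W, 1 - W, Matrix.ext fun i _ => i.elim0, Matrix.ext fun i _ => i.elim0⟩, rfl⟩,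
      ?_⟩
    intro phi _ _ x b
    exact ⟨x, fun i => i.elim0, fun Y _ => funext fun i => i.elim0⟩
  haveI : Nonempty (Fin M) := ⟨⟨0, hM⟩⟩
  obtain ⟨v, hv1, hvA⟩ := Stmt18Aux.exists_v hA hu
  obtain ⟨vmax, hvmaxdef⟩ : ∃ w : ℝ, w = Finset.univ.sup' Finset.univ_nonempty v := ⟨_, rfl⟩
  have hvle : ∀ i, v i ≤ vmax := fun i => hvmaxdef ▸ Finset.le_sup' v (Finset.mem_univ i)
  have hvmax1 : 1 ≤ vmax := le_trans (hv1 (Classical.arbitrary _)) (hvle _)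
  have hvmaxpos : 0 < vmax := lt_of_lt_of_le one_pos hvmax1
  obtain ⟨c, hcdef⟩ : ∃ c : ℝ, c = 1 - 1 / vmax := ⟨_, rfl⟩
  have hc0 : 0 ≤ c := by
    have h1 : 1 / vmax ≤ 1 := by rw [div_le_one hvmaxpos]; exact hvmax1
    rw [hcdef]; linarith
  have hc1 : c < 1 := by
    have h1 : 0 < 1 / vmax := by positivity
    rw [hcdef]; linarith
  have hAvc : ∀ i, A.mulVec v i ≤ c * v i := by
    intro i
    have h1 := hvA i
    have h2 : v i / vmax ≤ 1 := by rw [div_le_one hvmaxpos]; exact hvle i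
    have h3 : c * v i = v i - v i / vmax := by
      rw [hcdef]; field_simp
    linarith
  have hpow : ∀ n, ∀ i, (A ^ n).mulVec v i ≤ c ^ n * v i := by
    intro n
    induction n with
    | zero => intro i; simp [Matrix.one_mulVec]
    | succ n ih =>
      intro i
      have h1 : (A ^ (n + 1)).mulVec v = (A ^ n).mulVec (A.mulVec v) := by
        rw [pow_succ, ← Matrix.mulVec_mulVec]
      rw [h1]
      have h2 : (A ^ n).mulVec (A.mulVec v) i ≤ (A ^ n).mulVec (c • v) i :=
        Stmt18Aux.mulVec_mono (hA.pow n) (fun j => by simpa using hAvc j) i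
      have h3 : (A ^ n).mulVec (c • v) i = c * (A ^ n).mulVec v i := by
        rw [Matrix.mulVec_smul]; simp
      have h4 := ih i
      calc (A ^ n).mulVec (A.mulVec v) i ≤ c * (A ^ n).mulVec v i := by rw [← h3]; exact h2
        _ ≤ c * (c ^ n * v i) := by nlinarith
        _ = c ^ (n + 1) * v i := by ring
  have habs : ∀ (u : Fin M → ℝ) (i : Fin M), |W.mulVec u i| ≤ A.mulVec (fun j => |u j|) i := by
    intro u i
    simp only [Matrix.mulVec, dotProduct, hAdef, Matrix.map_apply]
    exact (Finset.abs_sum_le_sum_abs _ _).trans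
      (le_of_eq (Finset.sum_congr rfl fun j _ => abs_mul _ _))
  obtain ⟨N, hN⟩ := exists_pow_lt_of_lt_one (show (0 : ℝ) < 1 / vmax by positivity) hc1
  have hNlt : c ^ N * vmax < 1 := (lt_div_iff₀ hvmaxpos).mp hN
  have hq0 : 0 ≤ c ^ N * vmax := mul_nonneg (pow_nonneg hc0 N) hvmaxpos.le
  constructor
  · -- IsUnit (1 - W)
    have hker : ∀ y : Fin M → ℝ, (1 - W).mulVec y = 0 → y = 0 := by
      intro y hy
      have hyW : ∀ i, y i = W.mulVec y i := by
        intro i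
        have h := congrFun hy i
        rw [Matrix.sub_mulVec, Matrix.one_mulVec, Pi.sub_apply, Pi.zero_apply] at h
        linarith
      have hd : ∀ n i, |y i| ≤ ((A ^ n).mulVec (fun j => |y j|)) i := by
        intro n
        induction n with
        | zero => intro i; simp [Matrix.one_mulVec]
        | succ n ih =>
          intro i
          calc |y i| = |W.mulVec y i| := by rw [← hyW i]
            _ ≤ A.mulVec (fun j => |y j|) i := habs y i
            _ ≤ A.mulVec (fun j => ((A ^ n).mulVec (fun j => |y j|)) j) i :=
                Stmt18Aux.mulVec_mono hA (fun j => ih j) i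
            _ = ((A ^ (n + 1)).mulVec (fun j => |y j|)) i := by
                rw [Matrix.mulVec_mulVec, ← pow_succ']
      by_contra hy0
      have hnormpos : 0 < ‖y‖ := norm_pos_iff.2 hy0
      have hyb : ∀ j, |y j| ≤ ‖y‖ * v j := by
        intro j
        have h1 : |y j| ≤ ‖y‖ := by
          rw [← Real.norm_eq_abs]; exact norm_le_pi_norm y j
        nlinarith [hv1 j]
      have hbnd : ∀ i, |y i| ≤ c ^ N * vmax * ‖y‖ := by
        intro i
        calc |y i| ≤ ((A ^ N).mulVec (fun j => |y j|)) i := hd N i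
          _ ≤ ((A ^ N).mulVec (fun j => ‖y‖ * v j)) i := Stmt18Aux.mulVec_mono (hA.pow N) hyb i
          _ = ‖y‖ * ((A ^ N).mulVec v i) := by
              rw [show (fun j => ‖y‖ * v j) = ‖y‖ • v from rfl, Matrix.mulVec_smul]
              simp
          _ ≤ ‖y‖ * (c ^ N * v i) := mul_le_mul_of_nonneg_left (hpow N i) (norm_nonneg y)
          _ ≤ ‖y‖ * (c ^ N * vmax) := mul_le_mul_of_nonneg_left
              (mul_le_mul_of_nonneg_left (hvle i) (pow_nonneg hc0 N)) (norm_nonneg y)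
          _ = c ^ N * vmax * ‖y‖ := by ring
      have hfin : ‖y‖ ≤ c ^ N * vmax * ‖y‖ := by
        apply (pi_norm_le_iff_of_nonneg (by positivity)).2
        intro i
        rw [Real.norm_eq_abs]
        exact hbnd i
      nlinarith
    have hdet : (1 - W).det ≠ 0 := by
      intro h
      obtain ⟨y, hy0, hy⟩ := Matrix.exists_mulVec_eq_zero_iff.mpr h
      exact hy0 (hker y hy)
    exact (Matrix.isUnit_iff_isUnit_det _).2 (isUnit_iff_ne_zero.2 hdet)
  · intro phi hlip hphi0 x b
    set F : (Fin M → ℝ) → (Fin M → ℝ) := fun X i => x i + phi (W.mulVec X i + b i) with hF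
    have hFlip : ∀ X Y : Fin M → ℝ, ∀ i, |F X i - F Y i| ≤ A.mulVec (fun j => |X j - Y j|) i := by
      intro X Y i
      have h1 : F X i - F Y i = phi (W.mulVec X i + b i) - phi (W.mulVec Y i + b i) := by
        simp only [hF]; ring
      have h2 := hlip.dist_le_mul (W.mulVec X i + b i) (W.mulVec Y i + b i)
      rw [Real.dist_eq, Real.dist_eq] at h2
      have h3 : (W.mulVec X i + b i) - (W.mulVec Y i + b i) = W.mulVec (X - Y) i := by
        rw [Matrix.mulVec_sub, Pi.sub_apply]; ring
      calc |F X i - F Y i| = |phi (W.mulVec X i + b i) - phi (W.mulVec Y i + b i)| := by rw [h1]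
        _ ≤ |W.mulVec (X - Y) i| := by
            rw [← h3]; simpa using h2
        _ ≤ A.mulVec (fun j => |(X - Y) j|) i := habs (X - Y) i
        _ = A.mulVec (fun j => |X j - Y j|) i := by simp [Pi.sub_apply]
    have hFiter : ∀ n, ∀ X Y : Fin M → ℝ, ∀ i,
        |F^[n] X i - F^[n] Y i| ≤ ((A ^ n).mulVec (fun j => |X j - Y j|)) i := by
      intro n
      induction n with
      | zero => intro X Y i; simp [Matrix.one_mulVec]
      | succ n ih =>
        intro X Y i
        rw [Function.iterate_succ_apply', Function.iterate_succ_apply']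
        calc |F (F^[n] X) i - F (F^[n] Y) i|
            ≤ A.mulVec (fun j => |F^[n] X j - F^[n] Y j|) i := hFlip _ _ i
          _ ≤ A.mulVec (fun j => ((A ^ n).mulVec (fun j => |X j - Y j|)) j) i :=
              Stmt18Aux.mulVec_mono hA (fun j => ih X Y j) i
          _ = ((A ^ (n + 1)).mulVec (fun j => |X j - Y j|)) i := by
              rw [Matrix.mulVec_mulVec, ← pow_succ']
    have hcontr : ContractingWith (⟨c ^ N * vmax, hq0⟩ : NNReal) (F^[N]) := by
      constructor
      · exact_mod_cast hNlt
      · apply LipschitzWith.of_dist_le_mul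
        intro X Y
        have hKd : (0 : ℝ) ≤ c ^ N * vmax * dist X Y := mul_nonneg hq0 dist_nonneg
        show dist (F^[N] X) (F^[N] Y) ≤ c ^ N * vmax * dist X Y
        apply (dist_pi_le_iff hKd).2
        intro i
        rw [Real.dist_eq]
        calc |F^[N] X i - F^[N] Y i| ≤ ((A ^ N).mulVec (fun j => |X j - Y j|)) i :=
              hFiter N X Y i
          _ ≤ ((A ^ N).mulVec (fun j => dist X Y * v j)) i := by
              apply Stmt18Aux.mulVec_mono (hA.pow N) (fun j => ?_)
              have h5 : |X j - Y j| ≤ dist X Y := by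
                rw [← Real.dist_eq]; exact dist_le_pi_dist X Y j
              nlinarith [hv1 j, dist_nonneg (x := X) (y := Y)]
          _ = dist X Y * ((A ^ N).mulVec v i) := by
              rw [show (fun j => dist X Y * v j) = dist X Y • v from rfl, Matrix.mulVec_smul]
              simp
          _ ≤ dist X Y * (c ^ N * v i) := mul_le_mul_of_nonneg_left (hpow N i) dist_nonneg
          _ ≤ dist X Y * (c ^ N * vmax) := mul_le_mul_of_nonneg_left
              (mul_le_mul_of_nonneg_left (hvle i) (pow_nonneg hc0 N)) dist_nonneg
          _ = c ^ N * vmax * dist X Y := by ring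
    have hZfix : Function.IsFixedPt F (hcontr.fixedPoint (F^[N])) :=
      hcontr.isFixedPt_fixedPoint_iterate
    refine ⟨hcontr.fixedPoint (F^[N]), ?_, ?_⟩
    · intro i
      conv_lhs => rw [← hZfix]
    · intro Y hY
      have hYfix : Function.IsFixedPt F Y := funext fun i => (hY i).symm
      exact hcontr.fixedPoint_unique (hYfix.iterate N)
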